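/- For every smooth gauge parameter λ: ℝ³ → ℝ and every smooth vector field A: ℝ³ → ℝ³, the deformed products satisfy the two-input homotopy relation of the deformed abelian Chern–Simons L∞ algebra on the pair (λ, A): for each index a, Σ_{b,c} ε_{abc} ∂_b( −(v·A)∂_cλ − (v·∇λ)A_c ) + Σ_{i,b,c} v_i ε_{abc}( ∂_cλ ∂_bA_i + ∂_b∂_iλ A_c ) + (v·∇λ)(curl A)_a = 0; equivalently curl(b̃₂(A,λ)) + b̃₂(∇λ, A) + b̃₂(curl A, λ) = 0, where in the middle term the two-field product b̃₂(·,·) is evaluated on the vector fields ∇λ and A, and in the last term curl A is inserted in the degree −1 slot. -/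

import Mathlib

/- STATEMENT 0: two-input homotopy relation of the deformed abelian
Chern–Simons L∞ algebra on (λ, A). -/

noncomputable section

/-- Points of ℝ³ / vectors in ℝ³. -/
abbrev V3 := Fin 3 → ℝ

/-- Partial derivative ∂_i f at x. -/
def pd (f : V3 → ℝ) (i : Fin 3) (x : V3) : ℝ :=
  fderiv ℝ f x (Pi.single i 1)

/-- Levi-Civita symbol ε_{abc} on Fin 3. -/
def eps (a b c : Fin 3) : ℝ :=
  (((b : ℕ) : ℝ) - ((a : ℕ) : ℝ)) * (((c : ℕ) : ℝ) - ((b : ℕ) : ℝ)) *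
    (((c : ℕ) : ℝ) - ((a : ℕ) : ℝ)) / 2

/-- (curl A)_a = Σ_{b,c} ε_{abc} ∂_b A_c. -/
def curl (A : V3 → V3) (a : Fin 3) (x : V3) : ℝ :=
  ∑ b, ∑ c, eps a b c * pd (fun y => A y c) b x

lemma contDiff_pd {f : V3 → ℝ} (hf : ContDiff ℝ (⊤ : ℕ∞) f) (i : Fin 3) :
    ContDiff ℝ (⊤ : ℕ∞) (fun y => pd f i y) := by
  have h := hf.fderiv_right (m := (⊤ : ℕ∞)) (by simp)
  exact (ContinuousLinearMap.apply ℝ ℝ (Pi.single i 1)).contDiff.comp h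

lemma pd_pd_symm {f : V3 → ℝ} (hf : ContDiff ℝ (⊤ : ℕ∞) f) (i j : Fin 3) (x : V3) :
    pd (fun y => pd f j y) i x = pd (fun y => pd f i y) j x := by
  have hdf : Differentiable ℝ (fderiv ℝ f) :=
    (hf.fderiv_right (m := (⊤ : ℕ∞)) (by simp)).differentiable (by simp)
  have hsym : IsSymmSndFDerivAt ℝ f x := by
    apply ContDiffAt.isSymmSndFDerivAt (n := 2) (hf.contDiffAt.of_le ?_) (by simp)
    rw [show ((2:WithTop ℕ∞)) = ((2:ℕ∞) : WithTop ℕ∞) from rfl]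
    exact_mod_cast (le_top : (2:ℕ∞) ≤ ⊤)
  have key : ∀ w : V3, fderiv ℝ (fun y => fderiv ℝ f y w) x =
      (ContinuousLinearMap.flip (fderiv ℝ (fderiv ℝ f) x)) w := by
    intro w
    have := fderiv_clm_apply (c := fderiv ℝ f) (u := fun _ => w) (hdf x)
      (differentiableAt_const w)
    simpa using this
  show fderiv ℝ (fun y => fderiv ℝ f y (Pi.single j 1)) x (Pi.single i 1)
      = fderiv ℝ (fun y => fderiv ℝ f y (Pi.single i 1)) x (Pi.single j 1)
  rw [key, key]
  exact hsym (Pi.single i 1) (Pi.single j 1)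

lemma pd_sub {f g : V3 → ℝ} {x : V3} (hf : DifferentiableAt ℝ f x)
    (hg : DifferentiableAt ℝ g x) (i : Fin 3) :
    pd (fun y => f y - g y) i x = pd f i x - pd g i x := by
  simp [pd, fderiv_fun_sub hf hg]

lemma pd_mul {f g : V3 → ℝ} {x : V3} (hf : DifferentiableAt ℝ f x)
    (hg : DifferentiableAt ℝ g x) (i : Fin 3) :
    pd (fun y => f y * g y) i x = pd f i x * g x + f x * pd g i x := by
  simp [pd, fderiv_fun_mul hf hg]; ring

lemma pd_neg {f : V3 → ℝ} {x : V3} (i : Fin 3) :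
    pd (fun y => -f y) i x = -pd f i x := by
  simp [pd, fderiv_neg]

lemma pd_sum {F : Fin 3 → V3 → ℝ} {x : V3}
    (hF : ∀ j, DifferentiableAt ℝ (F j) x) (i : Fin 3) :
    pd (fun y => ∑ j, F j y) i x = ∑ j, pd (F j) i x := by
  simp [pd, fderiv_fun_sum (fun j _ => hF j)]

lemma pd_const_mul {f : V3 → ℝ} {x : V3} (hf : DifferentiableAt ℝ f x) (c : ℝ) (i : Fin 3) :
    pd (fun y => c * f y) i x = c * pd f i x := by
  simp [pd, fderiv_const_mul hf c]

theorem deformed_CS_two_input_homotopy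
    (v : V3) (lam : V3 → ℝ) (A : V3 → V3)
    (hlam : ContDiff ℝ (⊤ : ℕ∞) lam) (hA : ContDiff ℝ (⊤ : ℕ∞) A) :
    ∀ (a : Fin 3) (x : V3),
      -- curl(b̃₂(A,λ))_a
      (∑ b, ∑ c, eps a b c *
        pd (fun y => -(∑ i, v i * A y i) * pd lam c y
            - (∑ i, v i * pd lam i y) * A y c) b x)
      -- b̃₂(∇λ, A)_a
      + (∑ i, ∑ b, ∑ c, v i * eps a b c *
          (pd lam c x * pd (fun y => A y i) b x
            + pd (fun y => pd lam i y) b x * A x c))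
      -- b̃₂(curl A, λ)_a
      + (∑ i, v i * pd lam i x) * curl A a x = 0 := by
  intro a x
  have hAi : ∀ i, ContDiff ℝ (⊤:ℕ∞) (fun y => A y i) := fun i =>
    (ContinuousLinearMap.proj (R := ℝ) (φ := fun _ : Fin 3 => ℝ) i).contDiff.comp hA
  have hpdl : ∀ i, ContDiff ℝ (⊤:ℕ∞) (fun y => pd lam i y) := fun i => contDiff_pd hlam i
  have hG : ContDiff ℝ (⊤:ℕ∞) (fun y => ∑ i, v i * A y i) :=
    ContDiff.sum (fun i _ => contDiff_const.mul (hAi i))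
  have hK : ContDiff ℝ (⊤:ℕ∞) (fun y => ∑ i, v i * pd lam i y) :=
    ContDiff.sum (fun i _ => contDiff_const.mul (hpdl i))
  have e1 : ∀ b, pd (fun y => ∑ i, v i * A y i) b x
      = ∑ i, v i * pd (fun y => A y i) b x := by
    intro b
    rw [pd_sum (fun j => (contDiff_const.mul (hAi j)).differentiable (by simp) x)]
    exact Finset.sum_congr rfl
      (fun j _ => pd_const_mul ((hAi j).differentiable (by simp) x) _ b)
  have e2 : ∀ b, pd (fun y => ∑ i, v i * pd lam i y) b x
      = ∑ i, v i * pd (fun y => pd lam i y) b x := by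
    intro b
    rw [pd_sum (fun j => (contDiff_const.mul (hpdl j)).differentiable (by simp) x)]
    exact Finset.sum_congr rfl
      (fun j _ => pd_const_mul ((hpdl j).differentiable (by simp) x) _ b)
  have key : ∀ b c : Fin 3,
      pd (fun y => -(∑ i, v i * A y i) * pd lam c y
            - (∑ i, v i * pd lam i y) * A y c) b x
      = -((∑ i, v i * pd (fun y => A y i) b x) * pd lam c x
            + (∑ i, v i * A x i) * pd (fun y => pd lam c y) b x)
        - ((∑ i, v i * pd (fun y => pd lam i y) b x) * A x c
            + (∑ i, v i * pd lam i x) * pd (fun y => A y c) b x) := by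
    intro b c
    have h1 : pd (fun y => -(∑ i, v i * A y i)) b x
        = -(∑ i, v i * pd (fun y => A y i) b x) := by
      rw [pd_neg, e1]
    rw [pd_sub ((hG.neg.mul (hpdl c)).differentiable (by simp) x)
        ((hK.mul (hAi c)).differentiable (by simp) x),
      pd_mul (hG.neg.differentiable (by simp) x) ((hpdl c).differentiable (by simp) x),
      pd_mul (hK.differentiable (by simp) x) ((hAi c).differentiable (by simp) x),
      h1, e2]
    ring
  have s01 : pd (fun y => pd lam 0 y) 1 x = pd (fun y => pd lam 1 y) 0 x :=
    pd_pd_symm hlam 1 0 x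
  have s02 : pd (fun y => pd lam 0 y) 2 x = pd (fun y => pd lam 2 y) 0 x :=
    pd_pd_symm hlam 2 0 x
  have s12 : pd (fun y => pd lam 1 y) 2 x = pd (fun y => pd lam 2 y) 1 x :=
    pd_pd_symm hlam 2 1 x
  simp only [key]
  simp only [curl, Fin.sum_univ_three]
  fin_cases a <;>
    · norm_num [eps]
      simp only [s01, s02, s12]
      ring
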